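/- The projective monopole equations are equivalent to the SL(2,ℝ) Bogomolny equation: setting w = [[w₁/2, w₀],[−w₂, −w₁/2]] and A = [[A₁/2, A₀],[−A₂, −A₁/2]] (sl(2,ℝ)-valued density and connection 1-form), the three projective monopole equations hold if and only if *_B(D^B w + [A, w]) = dA + A∧A. -/
import Mathlib


/-- abstract model on a 3-dimensional Einstein-Weyl space `B`: the projective
monopole equations are equivalent to the `SL(2,ℝ)` Einstein-Weyl Bogomolny equation.
Setting `w = [[w₁/2, w₀], [-w₂, -w₁/2]]` (an `sl(2,ℝ)`-valued density) and
`A = [[A₁/2, A₀], [-A₂, -A₁/2]]` (an `sl(2,ℝ)`-valued connection `1`-form), the three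
projective monopole equations hold if and only if `*_B(D^B w + [A, w]) = dA + A ∧ A`
entrywise, where `[A,w]ᵢⱼ = ∑ₖ Aᵢₖ wₖⱼ - Aₖⱼ wᵢₖ` and `(A ∧ A)ᵢⱼ = ∑ₖ Aᵢₖ ∧ Aₖⱼ`. -/
theorem projective_monopole_sl2_bogomolny
    (W Ω1 Ω2 : Type*) [AddCommGroup W] [Module ℝ W]
    [AddCommGroup Ω1] [Module ℝ Ω1] [AddCommGroup Ω2] [Module ℝ Ω2]
    (star : Ω1 →ₗ[ℝ] Ω2)
    (DB : W →ₗ[ℝ] Ω1)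
    (d : Ω1 →ₗ[ℝ] Ω2)
    (smul : Ω1 →ₗ[ℝ] W →ₗ[ℝ] Ω1)
    (wedge : Ω1 →ₗ[ℝ] Ω1 →ₗ[ℝ] Ω2)
    (halt : ∀ a : Ω1, wedge a a = 0)
    (w0 w1 w2 : W) (A0 A1 A2 : Ω1)
    (Wm : Matrix (Fin 2) (Fin 2) W)
    (hWm : Wm = !![(2⁻¹ : ℝ) • w1, w0; -w2, -((2⁻¹ : ℝ) • w1)])
    (Am : Matrix (Fin 2) (Fin 2) Ω1)
    (hAm : Am = !![(2⁻¹ : ℝ) • A1, A0; -A2, -((2⁻¹ : ℝ) • A1)]) :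
    (star (DB w2 + smul A2 w1 - smul A1 w2) = d A2 + wedge A2 A1 ∧
     star ((2⁻¹ : ℝ) • DB w1 + smul A2 w0 - smul A0 w2)
        = (2⁻¹ : ℝ) • d A1 + wedge A2 A0 ∧
     star (DB w0 + smul A1 w0 - smul A0 w1) = d A0 + wedge A1 A0)
    ↔ (∀ i j : Fin 2,
        star (DB (Wm i j) + ∑ k, (smul (Am i k) (Wm k j) - smul (Am k j) (Wm i k)))
          = d (Am i j) + ∑ k, wedge (Am i k) (Am k j)) := by
  have anti : ∀ a b : Ω1, wedge a b = - wedge b a := by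
    intro a b
    have h := halt (a + b)
    simp only [map_add, LinearMap.add_apply, halt, zero_add, add_zero] at h
    exact eq_neg_of_add_eq_zero_right h
  subst hWm hAm
  constructor
  · rintro ⟨h1, h2, h3⟩ i j
    simp only [map_add, map_sub, map_smul] at h1 h2 h3
    fin_cases i <;> fin_cases j <;>
      simp only [Fin.sum_univ_two, Fin.isValue, Fin.mk_zero, Fin.mk_one, Matrix.cons_val',
        Matrix.cons_val_zero, Matrix.cons_val_one, Matrix.head_cons, Matrix.head_fin_const,
        Matrix.empty_val', Matrix.cons_val_fin_one, Matrix.of_apply, map_neg, map_add, map_sub,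
        map_smul, LinearMap.neg_apply, LinearMap.add_apply, LinearMap.sub_apply,
        LinearMap.smul_apply]
    · rw [halt A1, anti A0 A2]
      linear_combination (norm := module) h2
    · rw [anti A0 A1]
      linear_combination (norm := module) h3
    · rw [anti A1 A2]
      linear_combination (norm := module) -h1
    · rw [halt A1]
      linear_combination (norm := module) -h2
  · intro h
    have g1 := h 1 0
    have g2 := h 0 0
    have g3 := h 0 1
    simp only [Fin.sum_univ_two, Fin.isValue, Matrix.cons_val', Matrix.cons_val_zero,
      Matrix.cons_val_one, Matrix.head_cons, Matrix.head_fin_const, Matrix.empty_val',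
      Matrix.cons_val_fin_one, Matrix.of_apply, map_neg, map_add, map_sub, map_smul,
      LinearMap.neg_apply, LinearMap.add_apply, LinearMap.sub_apply, LinearMap.smul_apply,
      halt] at g1 g2 g3
    rw [anti A1 A2] at g1
    rw [anti A0 A2] at g2
    rw [anti A0 A1] at g3
    refine ⟨?_, ?_, ?_⟩ <;> simp only [map_add, map_sub, map_smul]
    · linear_combination (norm := module) -g1
    · linear_combination (norm := module) g2
    · linear_combination (norm := module) g3
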